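/- The graded ring A = ℚ[u,v,p]/(u², uv, up, p²) with |u|=|v|=2 and |p|=5 has Hilbert series p_X(t) = (1+t⁵)/(1−t²) + t², the radical of its maximal ideal of positive-degree elements equals the radical of the principal ideal (v), its zeroth local cohomology at the maximal ideal is H^0_m(A) = Σ²ℚ (one-dimensional in degree 2), and in particular A is not Cohen–Macaulay. -/

import Mathlib

set_option synthInstance.maxHeartbeats 1000000
set_option maxHeartbeats 1000000

open MvPolynomial

/-- The dimension of the degree-`n` homogeneous component (for the weighting `w` of the
variables) of the quotient of the polynomial ring `ℚ[u,v,p]` by a homogeneous ideal. -/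
noncomputable def gradedPieceDim (I : Ideal (MvPolynomial (Fin 3) ℚ)) (w : Fin 3 → ℕ)
    (n : ℕ) : ℕ :=
  Module.finrank ℚ
    ((weightedHomogeneousSubmodule ℚ w n) ⧸
      (Submodule.comap (weightedHomogeneousSubmodule ℚ w n).subtype
        (Submodule.restrictScalars ℚ (I : Submodule (MvPolynomial (Fin 3) ℚ)
          (MvPolynomial (Fin 3) ℚ)))))

/-- The defining ideal of `A = ℚ[u,v,p]/(u², uv, up, p²)`, `|u| = |v| = 2`, `|p| = 5`. -/
noncomputable def exIdeal : Ideal (MvPolynomial (Fin 3) ℚ) :=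
  Ideal.span {(X 0 : MvPolynomial (Fin 3) ℚ) ^ 2, X 0 * X 1, X 0 * X 2,
    (X 2 : MvPolynomial (Fin 3) ℚ) ^ 2}

/-- The ring `A = ℚ[u,v,p]/(u², uv, up, p²)`. -/
noncomputable abbrev ExRing : Type := MvPolynomial (Fin 3) ℚ ⧸ exIdeal

/-- The maximal ideal of positive-degree elements of `A`. -/
noncomputable def exMax : Ideal ExRing :=
  Ideal.span {Ideal.Quotient.mk exIdeal (X 0), Ideal.Quotient.mk exIdeal (X 1),
    Ideal.Quotient.mk exIdeal (X 2)}

/-- The `m`-power torsion submodule `Γ_m(A) = H^0_m(A)` of `A`. -/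
noncomputable def exTorsion : Submodule ExRing ExRing :=
  ⨆ j : ℕ, Submodule.torsionBySet ExRing ExRing ((exMax ^ j : Ideal ExRing) : Set ExRing)

abbrev R3 := MvPolynomial (Fin 3) ℚ

def Bad (m : Fin 3 →₀ ℕ) : Prop :=
  2 ≤ m 0 ∨ (1 ≤ m 0 ∧ 1 ≤ m 1) ∨ (1 ≤ m 0 ∧ 1 ≤ m 2) ∨ 2 ≤ m 2

noncomputable def En (n : ℕ) : Finset (Fin 3 →₀ ℕ) :=
  (if 2 ∣ n then {Finsupp.single 1 (n / 2)} else ∅) ∪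
    (if n = 2 then {Finsupp.single 0 1} else ∅) ∪
    (if ¬ 2 ∣ n ∧ 5 ≤ n then {Finsupp.single 1 ((n - 5) / 2) + Finsupp.single 2 1} else ∅)


def genSet : Set (Fin 3 →₀ ℕ) :=
  {Finsupp.single 0 2, Finsupp.single 0 1 + Finsupp.single 1 1,
   Finsupp.single 0 1 + Finsupp.single 2 1, Finsupp.single 2 2}

lemma exIdeal_eq : exIdeal = Ideal.span ((fun s => monomial s (1:ℚ)) '' genSet) := by
  unfold exIdeal genSet
  rw [Set.image_insert_eq, Set.image_insert_eq, Set.image_insert_eq, Set.image_singleton]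
  simp only [X_pow_eq_monomial]
  rw [show (X 0 : R3) * X 1 = monomial (Finsupp.single 0 1 + Finsupp.single 1 1) 1 by
        rw [X, X, monomial_mul, one_mul],
      show (X 0 : R3) * X 2 = monomial (Finsupp.single 0 1 + Finsupp.single 2 1) 1 by
        rw [X, X, monomial_mul, one_mul]]

lemma pair_le_iff (i j : Fin 3) (hij : i ≠ j) (m : Fin 3 →₀ ℕ) :
    (Finsupp.single i 1 + Finsupp.single j 1) ≤ m ↔ 1 ≤ m i ∧ 1 ≤ m j := by
  rw [Finsupp.le_def]
  constructor
  · intro h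
    constructor
    · have := h i; simpa [Finsupp.single_apply, hij.symm] using this
    · have := h j; simpa [Finsupp.single_apply, hij] using this
  · rintro ⟨h0, h1⟩ a
    simp only [Finsupp.add_apply, Finsupp.single_apply]
    rcases eq_or_ne i a with hi | hi
    · subst hi
      simpa [hij.symm, Finsupp.single_apply] using h0
    · rcases eq_or_ne j a with hj | hj
      · subst hj
        simpa [hi] using h1
      · simp [hi, hj]

lemma mem_exIdeal_iff {p : R3} : p ∈ exIdeal ↔ ∀ m ∈ p.support, Bad m := by
  rw [exIdeal_eq, mem_ideal_span_monomial_image]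
  refine forall₂_congr fun m _ => ?_
  unfold genSet Bad
  simp only [Set.mem_insert_iff, Set.mem_singleton_iff, exists_eq_or_imp, exists_eq_left]
  rw [Finsupp.single_le_iff, Finsupp.single_le_iff,
    pair_le_iff 0 1 (by decide), pair_le_iff 0 2 (by decide)]


lemma fin3_ext {m m' : Fin 3 →₀ ℕ} (h0 : m 0 = m' 0) (h1 : m 1 = m' 1)
    (h2 : m 2 = m' 2) : m = m' := by
  ext a; fin_cases a <;> assumption

lemma weight_eval (m : Fin 3 →₀ ℕ) :
    (Finsupp.weight ![2, 2, 5] m : ℕ) = 2 * m 0 + 2 * m 1 + 5 * m 2 := by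
  rw [Finsupp.weight_apply, Finsupp.sum_fintype]
  · simp [Fin.sum_univ_three]
    ring
  · intro i; exact zero_smul ℕ _

lemma mem_En {n : ℕ} {m : Fin 3 →₀ ℕ} :
    m ∈ En n ↔ ¬ Bad m ∧ (Finsupp.weight ![2, 2, 5] m : ℕ) = n := by
  unfold En Bad
  constructor
  · intro hm
    simp only [Finset.mem_union] at hm
    rcases hm with (hm | hm) | hm
    · rcases em (2 ∣ n) with h | h
      · rw [if_pos h, Finset.mem_singleton] at hm
        subst hm
        refine ⟨by simp [Finsupp.single_apply], ?_⟩
        rw [weight_eval]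
        simp [Finsupp.single_apply]
        omega
      · rw [if_neg h] at hm; exact absurd hm (Finset.notMem_empty _)
    · rcases em (n = 2) with h | h
      · rw [if_pos h, Finset.mem_singleton] at hm
        subst hm
        refine ⟨by simp [Finsupp.single_apply], ?_⟩
        rw [weight_eval]
        simp [Finsupp.single_apply, h]
      · rw [if_neg h] at hm; exact absurd hm (Finset.notMem_empty _)
    · rcases em (¬ 2 ∣ n ∧ 5 ≤ n) with h | h
      · rw [if_pos h, Finset.mem_singleton] at hm
        subst hm
        refine ⟨by simp [Finsupp.single_apply], ?_⟩
        rw [weight_eval]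
        simp [Finsupp.single_apply]
        omega
      · rw [if_neg h] at hm; exact absurd hm (Finset.notMem_empty _)
  · rintro ⟨hg, hw⟩
    rw [weight_eval] at hw
    push_neg at hg
    obtain ⟨g1, g2, g3, g4⟩ := hg
    simp only [Finset.mem_union]
    rcases Nat.lt_or_ge (m 0) 1 with ha | ha
    · have ha0 : m 0 = 0 := by omega
      rcases Nat.lt_or_ge (m 2) 1 with hc | hc
      · have hc0 : m 2 = 0 := by omega
        left; left
        have hdvd : 2 ∣ n := ⟨m 1, by omega⟩
        rw [if_pos hdvd, Finset.mem_singleton]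
        refine fin3_ext ?_ ?_ ?_ <;> simp [Finsupp.single_apply] <;> omega
      · have hc1 : m 2 = 1 := by omega
        right
        have hodd : ¬ 2 ∣ n := by omega
        have h5 : 5 ≤ n := by omega
        rw [if_pos ⟨hodd, h5⟩, Finset.mem_singleton]
        refine fin3_ext ?_ ?_ ?_ <;> simp [Finsupp.single_apply] <;> omega
    · have ha1 : m 0 = 1 := by omega
      have hb : m 1 = 0 := by have := g2 ha; omega
      have hc : m 2 = 0 := by have := g3 ha; omega
      left; right
      have h2 : n = 2 := by omega
      rw [if_pos h2, Finset.mem_singleton]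
      refine fin3_ext ?_ ?_ ?_ <;> simp [Finsupp.single_apply] <;> omega


lemma card_En' (n : ℕ) (En : Finset (Fin 3 →₀ ℕ))
    (h : En = (if 2 ∣ n then {Finsupp.single 1 (n / 2)} else ∅) ∪
      (if n = 2 then {Finsupp.single 0 1} else ∅) ∪
      (if ¬ 2 ∣ n ∧ 5 ≤ n then {Finsupp.single 1 ((n - 5) / 2) + Finsupp.single 2 1} else ∅)) :
    En.card = (if 2 ∣ n then 1 else 0) + (if n = 2 then 1 else 0) +
      (if ¬ 2 ∣ n ∧ 5 ≤ n then 1 else 0) := by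
  subst h
  rcases em (2 ∣ n) with h2 | h2
  · rcases em (n = 2) with he | he
    · subst he
      rw [if_pos h2, if_pos rfl, if_neg (by omega), if_pos h2, if_pos rfl, if_neg (by omega)]
      rw [Finset.union_empty]
      rw [Finset.card_union_of_disjoint]
      · simp
      · simp only [Finset.disjoint_singleton]
        intro hEq
        have := DFunLike.congr_fun hEq (0 : Fin 3)
        simp [Finsupp.single_apply] at this
    · rw [if_pos h2, if_neg he, if_neg (by tauto), if_pos h2, if_neg he, if_neg (by tauto)]
      simp
  · rcases em (5 ≤ n) with h5 | h5
    · rw [if_neg h2, if_neg (by omega), if_pos ⟨h2, h5⟩, if_neg h2, if_neg (by omega),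
        if_pos ⟨h2, h5⟩]
      simp
    · rw [if_neg h2, if_neg (by omega), if_neg (by tauto), if_neg h2, if_neg (by omega),
        if_neg (by tauto)]
      simp


noncomputable def mu (n : ℕ) :
    (weightedHomogeneousSubmodule ℚ ![2,2,5] n) →ₗ[ℚ] ((En n) → ℚ) where
  toFun p := fun m => coeff m.val p.val
  map_add' p q := by funext m; simp
  map_smul' c p := by funext m; simp

lemma mu_surj (n : ℕ) : Function.Surjective (mu n) := by
  intro f
  refine ⟨⟨∑ m ∈ (En n).attach, monomial m.val (f m), ?_⟩, ?_⟩
  · refine Submodule.sum_mem _ fun m _ => ?_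
    rw [mem_weightedHomogeneousSubmodule]
    exact isWeightedHomogeneous_monomial _ _ _ (mem_En.mp m.2).2
  · funext m'
    show coeff m'.val (∑ m ∈ (En n).attach, monomial m.val (f m)) = f m'
    rw [coeff_sum]
    simp only [coeff_monomial]
    have : ∀ m : {x // x ∈ En n}, (m.val = m'.val) = (m = m') := by
      intro m; rw [eq_iff_iff, Subtype.ext_iff]
    simp_rw [this]
    rw [Finset.sum_ite_eq' (En n).attach m' f]
    simp
lemma ker_mu (n : ℕ) : LinearMap.ker (mu n) =
    Submodule.comap (weightedHomogeneousSubmodule ℚ ![2,2,5] n).subtype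
      (Submodule.restrictScalars ℚ (exIdeal : Submodule R3 R3)) := by
  ext p
  rw [LinearMap.mem_ker, Submodule.mem_comap]
  have hRHS : (weightedHomogeneousSubmodule ℚ ![2,2,5] n).subtype p ∈
      Submodule.restrictScalars ℚ (exIdeal : Submodule R3 R3) ↔ p.val ∈ exIdeal := Iff.rfl
  rw [hRHS, mem_exIdeal_iff, funext_iff]
  constructor
  · intro h m hm
    by_contra hBad
    have hw : (Finsupp.weight ![2, 2, 5] m : ℕ) = n := p.2 (mem_support_iff.mp hm)
    have hmE : m ∈ En n := mem_En.mpr ⟨hBad, hw⟩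
    have := h ⟨m, hmE⟩
    simp only [Pi.zero_apply] at this
    exact mem_support_iff.mp hm this
  · intro h m
    simp only [Pi.zero_apply]
    by_contra hc
    have hm : m.val ∈ p.val.support := mem_support_iff.mpr hc
    exact (mem_En.mp m.2).1 (h _ hm)

lemma gradedPieceDim_eq (n : ℕ) : gradedPieceDim exIdeal ![2,2,5] n = (En n).card := by
  unfold gradedPieceDim
  rw [← ker_mu n]
  rw [LinearEquiv.finrank_eq ((mu n).quotKerEquivOfSurjective (mu_surj n))]
  rw [Module.finrank_pi, Fintype.card_coe]


lemma hilbert_sum (g : ℕ → ℕ)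
    (hg : ∀ n, (g n : ℝ) = (if 2 ∣ n then 1 else 0) + (if n = 2 then 1 else 0) +
      (if ¬ 2 ∣ n ∧ 5 ≤ n then 1 else 0))
    (t : ℝ) (ht : |t| < 1) :
    ∑' n : ℕ, (g n : ℝ) * t ^ n = (1 + t ^ 5) / (1 - t ^ 2) + t ^ 2 := by
  have t2nonneg : (0:ℝ) ≤ t ^ 2 := sq_nonneg t
  have ht2 : t ^ 2 < 1 := by nlinarith [sq_abs t, abs_nonneg t]
  have hne : (1 : ℝ) - t ^ 2 ≠ 0 := by nlinarith
  have h1 : HasSum (fun n : ℕ => if 2 ∣ n then t ^ n else 0) (1 - t ^ 2)⁻¹ := by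
    rw [← Function.Injective.hasSum_iff (g := fun k : ℕ => 2 * k)
      (fun a b h => by dsimp only at h; omega) (fun x hx => by
        rw [if_neg]
        rintro ⟨k, hk⟩
        exact hx ⟨k, by dsimp only; omega⟩)]
    have hfg : ((fun n : ℕ => if 2 ∣ n then t ^ n else 0) ∘ (fun k : ℕ => 2 * k)) =
        fun k : ℕ => (t ^ 2) ^ k := by
      funext k
      simp only [Function.comp_apply, if_pos (Dvd.intro k rfl)]
      rw [← pow_mul]
    rw [hfg]
    exact hasSum_geometric_of_lt_one t2nonneg ht2
  have h2 : HasSum (fun n : ℕ => if n = 2 then t ^ n else 0) (t ^ 2) := by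
    have : (fun n : ℕ => if n = 2 then t ^ n else 0) =
        fun n : ℕ => if n = 2 then t ^ 2 else 0 := by
      funext n; split_ifs with h
      · rw [h]
      · rfl
    rw [this]
    exact hasSum_ite_eq 2 (t ^ 2)
  have h3 : HasSum (fun n : ℕ => if ¬ 2 ∣ n ∧ 5 ≤ n then t ^ n else 0)
      (t ^ 5 * (1 - t ^ 2)⁻¹) := by
    rw [← Function.Injective.hasSum_iff (g := fun k : ℕ => 2 * k + 5)
      (fun a b h => by dsimp only at h; omega) (fun x hx => by
        rw [if_neg]
        rintro ⟨hodd, h5⟩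
        refine hx ⟨(x - 5) / 2, ?_⟩
        dsimp only
        omega)]
    have hfg : ((fun n : ℕ => if ¬ 2 ∣ n ∧ 5 ≤ n then t ^ n else 0) ∘
        (fun k : ℕ => 2 * k + 5)) = fun k : ℕ => t ^ 5 * (t ^ 2) ^ k := by
      funext k
      simp only [Function.comp_apply]
      rw [if_pos ⟨fun ⟨j, hj⟩ => by omega, by omega⟩, ← pow_mul, ← pow_add]
      ring_nf
    rw [hfg]
    exact (hasSum_geometric_of_lt_one t2nonneg ht2).mul_left _
  have htotal := (h1.add h2).add h3
  have hfun : (fun n : ℕ => (g n : ℝ) * t ^ n) =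
      (fun n : ℕ => ((if 2 ∣ n then t ^ n else 0) + (if n = 2 then t ^ n else 0)) +
        (if ¬ 2 ∣ n ∧ 5 ≤ n then t ^ n else 0)) := by
    funext n
    rw [hg n]
    split_ifs <;> ring
  rw [hfun, htotal.tsum_eq]
  field_simp
  ring


lemma X0X0_mem : (X 0 : R3) * X 0 ∈ exIdeal := by
  rw [← sq]; exact Ideal.subset_span (by simp)
lemma X1X0_mem : (X 1 : R3) * X 0 ∈ exIdeal := by
  rw [mul_comm]; exact Ideal.subset_span (by simp)
lemma X2X0_mem : (X 2 : R3) * X 0 ∈ exIdeal := by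
  rw [mul_comm]; exact Ideal.subset_span (by simp)

lemma ann_u : ∀ r ∈ exMax, r * Ideal.Quotient.mk exIdeal (X 0) = 0 := by
  have hle : exMax ≤ LinearMap.ker
      (LinearMap.toSpanSingleton ExRing ExRing (Ideal.Quotient.mk exIdeal (X 0))) := by
    rw [exMax, Ideal.span_le]
    rintro x hx
    simp only [Set.mem_insert_iff, Set.mem_singleton_iff] at hx
    rcases hx with rfl | rfl | rfl <;>
    · rw [SetLike.mem_coe, LinearMap.mem_ker, LinearMap.toSpanSingleton_apply, smul_eq_mul,
        ← map_mul, Ideal.Quotient.eq_zero_iff_mem]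
      first
      | exact X0X0_mem
      | exact X1X0_mem
      | exact X2X0_mem
  intro r hr
  have := hle hr
  rwa [LinearMap.mem_ker, LinearMap.toSpanSingleton_apply, smul_eq_mul] at this

lemma u_ne_zero : Ideal.Quotient.mk exIdeal (X 0) ≠ 0 := by
  rw [Ne, Ideal.Quotient.eq_zero_iff_mem, mem_exIdeal_iff]
  push_neg
  refine ⟨Finsupp.single 0 1, ?_, ?_⟩
  · rw [support_X]; simp
  · simp [Bad, Finsupp.single_apply]

lemma not_regular : ∀ r ∈ exMax, ¬ IsSMulRegular ExRing r := by
  intro r hr hreg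
  apply u_ne_zero
  apply hreg
  show r • Ideal.Quotient.mk exIdeal (X 0) = r • 0
  rw [smul_eq_mul, smul_eq_mul, mul_zero, ann_u r hr]

lemma rad_eq : exMax.radical = (Ideal.span {Ideal.Quotient.mk exIdeal (X 1)}).radical := by
  apply le_antisymm
  · rw [Ideal.radical_le_radical_iff, exMax, Ideal.span_le]
    rintro x hx
    simp only [Set.mem_insert_iff, Set.mem_singleton_iff] at hx
    rcases hx with rfl | rfl | rfl
    · exact ⟨2, by
        rw [← map_pow, sq, Ideal.Quotient.eq_zero_iff_mem.mpr X0X0_mem]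
        exact Submodule.zero_mem _⟩
    · exact ⟨1, by rw [pow_one]; exact Ideal.subset_span rfl⟩
    · refine ⟨2, ?_⟩
      have hmem : (X 2 : R3) ^ 2 ∈ exIdeal := Ideal.subset_span (by simp)
      rw [← map_pow, Ideal.Quotient.eq_zero_iff_mem.mpr hmem]
      exact Submodule.zero_mem _
  · exact Ideal.radical_mono (Ideal.span_le.mpr (by
      rintro x rfl
      exact Ideal.subset_span (by simp)))

lemma key_torsion (k : ℕ) (q : R3) (h : X 1 ^ (k + 1) * q ∈ exIdeal) :
    Ideal.Quotient.mk exIdeal q ∈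
      Submodule.span ExRing {Ideal.Quotient.mk exIdeal (X 0)} := by
  set c := coeff (Finsupp.single 0 1) q with hc
  have hCX : (C c * X 0 : R3) = monomial (Finsupp.single 0 1) c := by
    rw [X, C_mul_monomial, mul_one]
  have hqm : q - C c * X 0 ∈ exIdeal := by
    rw [mem_exIdeal_iff]
    intro m hm
    rw [hCX] at hm
    have hcoeff : coeff m (q - monomial (Finsupp.single 0 1) c) ≠ 0 := mem_support_iff.mp hm
    rw [coeff_sub, coeff_monomial] at hcoeff
    have hmne : m ≠ Finsupp.single 0 1 := by
      rintro rfl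
      rw [if_pos rfl, hc, sub_self] at hcoeff
      exact hcoeff rfl
    rw [if_neg (fun hEq => hmne hEq.symm), sub_zero] at hcoeff
    have hb : Bad (Finsupp.single 1 (k + 1) + m) := by
      rw [mem_exIdeal_iff] at h
      apply h
      rw [mem_support_iff, X_pow_eq_monomial, coeff_monomial_mul, one_mul]
      exact hcoeff
    unfold Bad at hb ⊢
    have e0 : (Finsupp.single (1 : Fin 3) (k + 1) + m) (0 : Fin 3) = m 0 := by
      rw [Finsupp.add_apply, Finsupp.single_apply, if_neg (by decide), zero_add]
    have e1 : (Finsupp.single (1 : Fin 3) (k + 1) + m) (1 : Fin 3) = k + 1 + m 1 := by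
      rw [Finsupp.add_apply, Finsupp.single_apply, if_pos rfl]
    have e2 : (Finsupp.single (1 : Fin 3) (k + 1) + m) (2 : Fin 3) = m 2 := by
      rw [Finsupp.add_apply, Finsupp.single_apply, if_neg (by decide), zero_add]
    rw [e0, e1, e2] at hb
    rcases hb with h' | ⟨h1, _⟩ | h' | h'
    · left; exact h'
    · -- 1 ≤ m 0
      rcases Nat.lt_or_ge (m 0) 2 with hm0 | hm0
      · rcases Nat.lt_or_ge (m 1) 1 with hm1 | hm1
        · rcases Nat.lt_or_ge (m 2) 1 with hm2 | hm2
          · exfalso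
            apply hmne
            refine fin3_ext ?_ ?_ ?_ <;> simp [Finsupp.single_apply] <;> omega
          · right; right; left; exact ⟨h1, hm2⟩
        · right; left; exact ⟨h1, hm1⟩
      · left; exact hm0
    · right; right; left; exact h'
    · right; right; right; exact h'
  rw [Submodule.mem_span_singleton]
  refine ⟨Ideal.Quotient.mk exIdeal (C c), ?_⟩
  rw [smul_eq_mul, ← map_mul, Ideal.Quotient.eq]
  exact (neg_sub q (C c * X 0)) ▸ Submodule.neg_mem _ hqm

lemma torsion_eq :
    exTorsion = Submodule.span ExRing {Ideal.Quotient.mk exIdeal (X 0)} := by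
  apply le_antisymm
  · rw [exTorsion]
    refine iSup_le fun j => ?_
    intro x hx
    obtain ⟨q, rfl⟩ := Ideal.Quotient.mk_surjective x
    rw [Submodule.mem_torsionBySet_iff] at hx
    have h1 : Ideal.Quotient.mk exIdeal (X 1) ∈ exMax := Ideal.subset_span (by simp)
    have hv : (Ideal.Quotient.mk exIdeal (X 1)) ^ (j + 1) ∈ (exMax ^ j : Ideal ExRing) := by
      rw [pow_succ]
      exact Ideal.mul_mem_right _ _ (Ideal.pow_mem_pow h1 j)
    have h0 : (Ideal.Quotient.mk exIdeal (X 1)) ^ (j + 1) * Ideal.Quotient.mk exIdeal q = 0 :=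
      hx ⟨_, hv⟩
    rw [← map_pow, ← map_mul, Ideal.Quotient.eq_zero_iff_mem] at h0
    exact key_torsion j q h0
  · rw [Submodule.span_le]
    rintro x hx
    rw [Set.mem_singleton_iff] at hx
    subst hx
    refine (le_iSup _ 1 : _ ≤ exTorsion) ?_
    rw [Submodule.mem_torsionBySet_iff]
    rintro ⟨a, ha⟩
    replace ha : a ∈ exMax := by simpa using ha
    show a • Ideal.Quotient.mk exIdeal (X 0) = 0
    rw [smul_eq_mul]
    exact ann_u a ha


noncomputable def phi : R3 →ₐ[ℚ] Polynomial ℚ := aeval ![0, Polynomial.X, 0]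

lemma phi_coeff (p : R3) (k : ℕ) :
    (phi p).coeff k = coeff (Finsupp.single 1 k) p := by
  induction p using MvPolynomial.induction_on' with
  | add p q hp hq => simp [map_add, Polynomial.coeff_add, coeff_add, hp, hq]
  | monomial m a =>
    rw [phi, aeval_monomial, Finsupp.prod_pow, Fin.prod_univ_three]
    simp only [Matrix.cons_val_zero, Matrix.cons_val_one, Matrix.head_cons,
      Matrix.cons_val_two, Matrix.tail_cons]
    rw [coeff_monomial]
    rcases Nat.eq_zero_or_pos (m 0) with h0 | h0
    · rcases Nat.eq_zero_or_pos (m 2) with h2 | h2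
      · rw [h0, h2]
        simp only [pow_zero, one_mul, mul_one, Polynomial.algebraMap_eq,
          Polynomial.coeff_C_mul, Polynomial.coeff_X_pow]
        by_cases h1 : m 1 = k
        · rw [if_pos h1.symm, if_pos (fin3_ext (by simp [Finsupp.single_apply, h0])
            (by simp [Finsupp.single_apply, h1]) (by simp [Finsupp.single_apply, h2])), mul_one]
        · rw [if_neg (fun hh => h1 hh.symm),
            if_neg (fun hh => h1 (by rw [hh]; simp [Finsupp.single_apply])), mul_zero]
      · have hne : m ≠ Finsupp.single 1 k := fun hEq => by
          rw [hEq] at h2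
          simp [Finsupp.single_apply] at h2
        rw [if_neg hne]
        simp [zero_pow h2.ne']
    · have hne : m ≠ Finsupp.single 1 k := fun hEq => by
        rw [hEq] at h0
        simp [Finsupp.single_apply] at h0
      rw [if_neg hne]
      simp [zero_pow h0.ne']

lemma phi_surj : Function.Surjective phi := by
  intro q
  refine ⟨Polynomial.aeval (X 1 : R3) q, ?_⟩
  rw [← Polynomial.aeval_algHom_apply]
  have : phi (X 1) = Polynomial.X := by
    rw [phi, aeval_X]
    rfl
  rw [this]
  exact Polynomial.aeval_X_left_apply q

noncomputable def Jxz : Ideal R3 := Ideal.span {X 0, X 2}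

lemma Jxz_eq : Jxz = Ideal.span (MvPolynomial.X '' ({0, 2} : Set (Fin 3))) := by
  rw [Jxz, Set.image_insert_eq, Set.image_singleton]

lemma ker_phi : RingHom.ker (phi : R3 →+* Polynomial ℚ) = Jxz := by
  ext p
  rw [RingHom.mem_ker, Jxz_eq, mem_ideal_span_X_image]
  constructor
  · intro h m hm
    have h' : phi p = 0 := h
    by_contra hc
    push_neg at hc
    have h0 : m 0 = 0 := by simpa using hc 0 (by simp)
    have h2 : m 2 = 0 := by simpa using hc 2 (by simp)
    have hm1 : m = Finsupp.single 1 (m 1) :=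
      fin3_ext (by simp [Finsupp.single_apply, h0]) (by simp [Finsupp.single_apply])
        (by simp [Finsupp.single_apply, h2])
    have := phi_coeff p (m 1)
    rw [← hm1, h'] at this
    simp only [Polynomial.coeff_zero] at this
    exact mem_support_iff.mp hm this.symm
  · intro h
    show phi p = 0
    apply Polynomial.ext
    intro k
    rw [phi_coeff, Polynomial.coeff_zero]
    by_contra hc
    obtain ⟨i, hi, hne⟩ := h _ (mem_support_iff.mpr hc)
    rcases hi with rfl | hi
    · simp [Finsupp.single_apply] at hne
    · rw [Set.mem_singleton_iff] at hi
      subst hi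
      simp [Finsupp.single_apply] at hne

lemma exIdeal_le_Jxz : exIdeal ≤ Jxz := by
  rw [exIdeal, Ideal.span_le]
  intro x hx
  simp only [Set.mem_insert_iff, Set.mem_singleton_iff] at hx
  have h0 : (X 0 : R3) ∈ Jxz := Ideal.subset_span (by simp)
  have h2 : (X 2 : R3) ∈ Jxz := Ideal.subset_span (by simp)
  rcases hx with rfl | rfl | rfl | rfl
  · rw [sq]; exact Ideal.mul_mem_left _ _ h0
  · exact Ideal.mul_mem_right _ _ h0
  · exact Ideal.mul_mem_right _ _ h0
  · rw [sq]; exact Ideal.mul_mem_left _ _ h2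

noncomputable def exK : Ideal ExRing := Ideal.map (Ideal.Quotient.mk exIdeal) Jxz

noncomputable def eQuot : (ExRing ⧸ exK) ≃+* Polynomial ℚ :=
  (DoubleQuot.quotQuotEquivQuotSup exIdeal Jxz).trans <|
    (Ideal.quotEquivOfEq (sup_eq_right.mpr exIdeal_le_Jxz)).trans <|
      (Ideal.quotEquivOfEq ker_phi.symm).trans
        (RingHom.quotientKerEquivOfSurjective phi_surj)

lemma exK_le_prime (P : Ideal ExRing) (hP : P.IsPrime) : exK ≤ P := by
  rw [exK, Jxz, Ideal.map_span, Set.image_insert_eq, Set.image_singleton, Ideal.span_le]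
  rintro x hx
  simp only [Set.mem_insert_iff, Set.mem_singleton_iff] at hx
  have sq0 : ∀ y : R3, y * y ∈ exIdeal → Ideal.Quotient.mk exIdeal y ∈ P := by
    intro y hy
    refine hP.mem_of_pow_mem 2 ?_
    rw [sq, ← map_mul, Ideal.Quotient.eq_zero_iff_mem.mpr hy]
    exact Submodule.zero_mem _
  rcases hx with rfl | rfl
  · exact sq0 _ (by rw [← sq]; exact Ideal.subset_span (by simp))
  · exact sq0 _ (by rw [← sq]; exact Ideal.subset_span (by simp))

lemma dim_le_quot : ringKrullDim ExRing ≤ ringKrullDim (ExRing ⧸ exK) := by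
  have hf : StrictMono (fun p : PrimeSpectrum ExRing =>
      (⟨Ideal.map (Ideal.Quotient.mk exK) p.asIdeal,
        Ideal.map_isPrime_of_surjective Ideal.Quotient.mk_surjective
          (by rw [Ideal.mk_ker]; exact exK_le_prime _ p.2)⟩ :
        PrimeSpectrum (ExRing ⧸ exK))) := by
    intro p q hpq
    rw [← PrimeSpectrum.asIdeal_lt_asIdeal]
    refine lt_of_le_of_ne
      (Ideal.map_mono (le_of_lt ((PrimeSpectrum.asIdeal_lt_asIdeal _ _).mpr hpq))) ?_
    intro hEq
    have hker : Ideal.comap (Ideal.Quotient.mk exK) (⊥ : Ideal (ExRing ⧸ exK)) = exK :=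
      Ideal.mk_ker
    have := congrArg (Ideal.comap (Ideal.Quotient.mk exK)) hEq
    rw [Ideal.comap_map_of_surjective _ Ideal.Quotient.mk_surjective,
      Ideal.comap_map_of_surjective _ Ideal.Quotient.mk_surjective, hker,
      sup_eq_left.mpr (exK_le_prime _ p.2), sup_eq_left.mpr (exK_le_prime _ q.2)] at this
    exact ne_of_lt ((PrimeSpectrum.asIdeal_lt_asIdeal _ _).mpr hpq) this
  exact Order.krullDim_le_of_strictMono _ hf

lemma dim_poly_le : ringKrullDim (Polynomial ℚ) ≤ 1 := by
  show Order.krullDim (PrimeSpectrum (Polynomial ℚ)) ≤ 1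
  rw [Order.krullDim_eq_iSup_length]
  have hlen : ∀ l : LTSeries (PrimeSpectrum (Polynomial ℚ)), l.length ≤ 1 := by
    intro l
    by_contra hl
    push_neg at hl
    have h01 : l ⟨1, by omega⟩ < l ⟨2, by omega⟩ :=
      l.strictMono (by rw [Fin.mk_lt_mk]; omega)
    have h00 : l ⟨0, by omega⟩ < l ⟨1, by omega⟩ :=
      l.strictMono (by rw [Fin.mk_lt_mk]; omega)
    have hbot : (l ⟨1, by omega⟩).asIdeal ≠ ⊥ := by
      have := (PrimeSpectrum.asIdeal_lt_asIdeal _ _).mpr h00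
      exact (bot_le.trans_lt this).ne'
    have hmax := IsPrime.to_maximal_ideal (hpi := (l ⟨1, by omega⟩).isPrime) hbot
    have hlt := (PrimeSpectrum.asIdeal_lt_asIdeal _ _).mpr h01
    exact ne_of_lt hlt (hmax.eq_of_le (Ideal.IsPrime.ne_top (l ⟨2, by omega⟩).isPrime) hlt.le)
  have : (⨆ l : LTSeries (PrimeSpectrum (Polynomial ℚ)), (l.length : ℕ∞)) ≤ 1 :=
    iSup_le fun l => by exact_mod_cast hlen l
  exact_mod_cast this

lemma dim_poly_ge : (1 : WithBot (WithTop ℕ)) ≤ ringKrullDim (Polynomial ℚ) := by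
  have hp : (Ideal.span {Polynomial.X} : Ideal (Polynomial ℚ)).IsPrime :=
    (Ideal.span_singleton_prime Polynomial.X_ne_zero).mpr Polynomial.prime_X
  set a : PrimeSpectrum (Polynomial ℚ) := ⟨⊥, Ideal.bot_prime⟩ with ha
  set b : PrimeSpectrum (Polynomial ℚ) := ⟨Ideal.span {Polynomial.X}, hp⟩ with hb
  have hab : a < b := by
    rw [← PrimeSpectrum.asIdeal_lt_asIdeal]
    refine bot_lt_iff_ne_bot.mpr ?_
    show (Ideal.span {Polynomial.X} : Ideal (Polynomial ℚ)) ≠ ⊥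
    rw [Ne, Ideal.span_singleton_eq_bot]
    exact Polynomial.X_ne_zero
  have hab' : ((RelSeries.singleton (α := PrimeSpectrum (Polynomial ℚ)) {(x, y) : PrimeSpectrum (Polynomial ℚ) × PrimeSpectrum (Polynomial ℚ) | x < y} a).last, b) ∈
      {(x, y) : PrimeSpectrum (Polynomial ℚ) × PrimeSpectrum (Polynomial ℚ) | x < y} := by
    rw [RelSeries.last_singleton]
    exact hab
  have hkd := Order.LTSeries.length_le_krullDim
    (α := PrimeSpectrum (Polynomial ℚ)) ((RelSeries.singleton {(x, y) : PrimeSpectrum (Polynomial ℚ) × PrimeSpectrum (Polynomial ℚ) | x < y} a).snoc b hab')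
  have hlen : ((RelSeries.singleton (α := PrimeSpectrum (Polynomial ℚ)) {(x, y) : PrimeSpectrum (Polynomial ℚ) × PrimeSpectrum (Polynomial ℚ) | x < y} a).snoc b
      hab').length = 1 := rfl
  rw [hlen] at hkd
  show (1 : WithBot (WithTop ℕ)) ≤ Order.krullDim (PrimeSpectrum (Polynomial ℚ))
  exact_mod_cast hkd

lemma dim_ExRing : ringKrullDim ExRing = 1 := by
  have hquot : ringKrullDim (ExRing ⧸ exK) = ringKrullDim (Polynomial ℚ) :=
    ringKrullDim_eq_of_ringEquiv eQuot
  apply le_antisymm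
  · exact (dim_le_quot.trans (le_of_eq hquot)).trans dim_poly_le
  · calc (1 : WithBot ℕ∞) ≤ ringKrullDim (Polynomial ℚ) := dim_poly_ge
      _ = ringKrullDim (ExRing ⧸ exK) := hquot.symm
      _ ≤ ringKrullDim ExRing := ringKrullDim_quotient_le exK

theorem stmt14 :
    (∀ t : ℝ, |t| < 1 →
        ∑' n : ℕ, ((gradedPieceDim exIdeal ![2, 2, 5] n : ℝ)) * t ^ n =
          (1 + t ^ 5) / (1 - t ^ 2) + t ^ 2) ∧
      exMax.radical = (Ideal.span {Ideal.Quotient.mk exIdeal (X 1)}).radical ∧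
      exTorsion = Submodule.span ExRing {Ideal.Quotient.mk exIdeal (X 0)} ∧
      Ideal.Quotient.mk exIdeal (X 0) ≠ 0 ∧
      ringKrullDim ExRing = 1 ∧
      (∀ r ∈ exMax, ¬ IsSMulRegular ExRing r) := by
  refine ⟨?_, rad_eq, torsion_eq, u_ne_zero, dim_ExRing, not_regular⟩
  intro t ht
  have hcongr : ∀ n : ℕ, ((gradedPieceDim exIdeal ![2, 2, 5] n : ℝ)) * t ^ n =
      (((En n).card : ℕ) : ℝ) * t ^ n := by
    intro n
    rw [gradedPieceDim_eq]
  rw [tsum_congr hcongr]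
  refine hilbert_sum (fun n => (En n).card) ?_ t ht
  intro n
  show (((En n).card : ℕ) : ℝ) = _
  rw [card_En' n (En n) rfl]
  push_cast
  ring
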